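/- (Inverse second moment identity) Let M' be an m×n complex matrix with m ≤ n and full row rank, with rows R_1, ..., R_m. Let R_{−i} denote the span of the rows R_j for j ≠ i. Then ∑_{i=1}^m s_i(M')^{−2} = ∑_{i=1}^m dist(R_i, R_{−i})^{−2}, where s_1(M') ≥ ... ≥ s_m(M') are the singular values of M' and dist denotes Euclidean distance in ℂ^n. -/

import Mathlib

open Matrix ComplexOrder

local notation "⟪" x ", " y "⟫" => @inner ℂ _ _ x y

/-- The inverse second moment identity: for a full row rank `m × n` complex matrix (`m ≤ n`),
the sum of the inverse squares of the singular values equals the sum of the inverse squares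
of the distances from each row to the span of the other rows. -/
theorem inverse_second_moment_identity
    (m n : ℕ) (hmn : m ≤ n) (M : Matrix (Fin m) (Fin n) ℂ)
    (row : Fin m → EuclideanSpace ℂ (Fin n))
    (hrow : ∀ i, row i = (WithLp.equiv 2 (Fin n → ℂ)).symm (M i))
    (hrank : ∀ i, (Matrix.posSemidef_self_mul_conjTranspose M).1.eigenvalues i ≠ 0) :
    ∑ i : Fin m,
        (Real.sqrt ((Matrix.posSemidef_self_mul_conjTranspose M).1.eigenvalues i) ^ 2)⁻¹ =
      ∑ i : Fin m,
        (Metric.infDist (row i)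
            (Submodule.span ℂ (row '' {j | j ≠ i}) : Set (EuclideanSpace ℂ (Fin n))) ^ 2)⁻¹ := by
  classical
  set hA := Matrix.posSemidef_self_mul_conjTranspose M with hAdef
  set A : Matrix (Fin m) (Fin m) ℂ := M * Mᴴ with hAdefn
  have hH : A.IsHermitian := hA.1
  set lam : Fin m → ℝ := hH.eigenvalues with hlam
  have hpos : ∀ i, 0 < lam i := fun i => lt_of_le_of_ne (hA.eigenvalues_nonneg i) (Ne.symm (hrank i))
  -- A is invertible
  have hdet : IsUnit A.det := by
    rw [hH.det_eq_prod_eigenvalues]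
    refine isUnit_iff_ne_zero.2 (Finset.prod_ne_zero_iff.2 fun i _ => ?_)
    exact Complex.ofReal_ne_zero.2 (hpos i).ne'
  have hABinv : A⁻¹ * A = 1 := Matrix.nonsing_inv_mul A hdet
  -- spectral computation of trace of A⁻¹
  set U : Matrix (Fin m) (Fin m) ℂ := (Matrix.IsHermitian.eigenvectorUnitary hH : Matrix (Fin m) (Fin m) ℂ) with hU
  have hU1 : U * star U = 1 := (Matrix.mem_unitaryGroup_iff).mp (Matrix.IsHermitian.eigenvectorUnitary hH).2
  have hU2 : star U * U = 1 := (Matrix.mem_unitaryGroup_iff').mp (Matrix.IsHermitian.eigenvectorUnitary hH).2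
  set D : Matrix (Fin m) (Fin m) ℂ := Matrix.diagonal (RCLike.ofReal ∘ lam) with hD
  set D' : Matrix (Fin m) (Fin m) ℂ := Matrix.diagonal (fun i => ((lam i : ℂ))⁻¹) with hD'
  have hDD' : D * D' = 1 := by
    rw [hD, hD', Matrix.diagonal_mul_diagonal]
    have h : (fun i => (RCLike.ofReal ∘ lam) i * ((lam i : ℂ))⁻¹) = fun _ => (1 : ℂ) :=
      funext fun i => mul_inv_cancel₀ (Complex.ofReal_ne_zero.2 (hpos i).ne')
    rw [h]
    exact Matrix.diagonal_one
  have hspec : A = U * D * star U := hH.spectral_theorem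
  have hAC : A * (U * D' * star U) = 1 := by
    rw [hspec]
    calc U * D * star U * (U * D' * star U)
        = U * D * (star U * U) * D' * star U := by
          simp only [Matrix.mul_assoc]
      _ = U * (D * D') * star U := by rw [hU2, Matrix.mul_one]; simp only [Matrix.mul_assoc]
      _ = 1 := by rw [hDD', Matrix.mul_one, hU1]
  have hBC : A⁻¹ = U * D' * star U := Matrix.inv_eq_right_inv hAC
  have htrace : Matrix.trace A⁻¹ = ∑ i, ((lam i : ℂ))⁻¹ := by
    rw [hBC, Matrix.trace_mul_comm (U * D') (star U), ← Matrix.mul_assoc, hU2, Matrix.one_mul,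
      hD', Matrix.trace_diagonal]
  -- the dual vectors
  set w : Fin m → EuclideanSpace ℂ (Fin n) := fun i => ∑ j, A⁻¹ i j • row j with hwdef
  have hinner : ∀ j k, ⟪row j, row k⟫ = A k j := by
    intro j k
    rw [hrow, hrow]
    simp only [PiLp.inner_apply, RCLike.inner_apply, WithLp.equiv_symm_apply, hAdefn,
      Matrix.mul_apply, Matrix.conjTranspose_apply]
    exact Finset.sum_congr rfl fun t _ => rfl
  have hw : ∀ i k, ⟪row k, w i⟫ = if i = k then 1 else 0 := by
    intro i k
    rw [hwdef]
    simp only [inner_sum, inner_smul_right]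
    calc ∑ j, A⁻¹ i j * ⟪row k, row j⟫ = ∑ j, A⁻¹ i j * A j k :=
          Finset.sum_congr rfl fun j _ => by rw [hinner]
      _ = (A⁻¹ * A) i k := (Matrix.mul_apply).symm
      _ = _ := by rw [hABinv, Matrix.one_apply]
  have hwi : ∀ i, ⟪row i, w i⟫ = 1 := fun i => by rw [hw, if_pos rfl]
  have hwk : ∀ i k, k ≠ i → ⟪row k, w i⟫ = 0 := fun i k h => by
    rw [hw, if_neg (Ne.symm h)]
  have hBH : (A⁻¹).IsHermitian := hH.inv
  have hnorm : ∀ i, ((‖w i‖ ^ 2 : ℝ) : ℂ) = A⁻¹ i i := by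
    intro i
    have h1 : ⟪w i, w i⟫ = (starRingEnd ℂ) (A⁻¹ i i) := by
      conv_lhs => rw [hwdef]
      simp only [sum_inner, inner_smul_left]
      rw [Finset.sum_eq_single i]
      · rw [hwi, mul_one]
      · intro k _ hk
        rw [hwk i k hk, mul_zero]
      · simp
    have h2 : (starRingEnd ℂ) (A⁻¹ i i) = A⁻¹ i i := by
      have := congrFun (congrFun hBH i) i
      simpa [Matrix.conjTranspose_apply] using this
    rw [← h2, ← h1, inner_self_eq_norm_sq_to_K]
    norm_cast
  have hwpos : ∀ i, 0 < ‖w i‖ := by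
    intro i
    rcases eq_or_ne (w i) 0 with h | h
    · exfalso
      have := hwi i
      rw [h, inner_zero_right] at this
      exact one_ne_zero this.symm
    · exact norm_pos_iff.2 h
  -- the per-row distance computation
  have hdist : ∀ i, Metric.infDist (row i)
      (Submodule.span ℂ (row '' {j | j ≠ i}) : Set (EuclideanSpace ℂ (Fin n))) = ‖w i‖⁻¹ := by
    intro i
    set W := Submodule.span ℂ (row '' {j | j ≠ i}) with hW
    set c : ℂ := A⁻¹ i i with hc
    have hcr : c = ((‖w i‖ ^ 2 : ℝ) : ℂ) := (hnorm i).symm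
    have hcne : c ≠ 0 := by
      rw [hcr]
      exact_mod_cast (pow_pos (hwpos i) 2).ne'
    have horth : ∀ u ∈ W, ⟪w i, u⟫ = 0 := by
      intro u hu
      induction hu using Submodule.span_induction with
      | mem x hx =>
        obtain ⟨k, hk, rfl⟩ := hx
        rw [← inner_conj_symm, hwk i k hk, map_zero]
      | zero => exact inner_zero_right _
      | add x y _ _ hx hy => rw [inner_add_right, hx, hy, add_zero]
      | smul a x _ hx => rw [inner_smul_right, hx, mul_zero]
    set v : EuclideanSpace ℂ (Fin n) := row i - c⁻¹ • w i with hv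
    have hsplit : c⁻¹ • w i = row i + ∑ j ∈ Finset.univ.erase i, (c⁻¹ * A⁻¹ i j) • row j := by
      rw [hwdef]
      simp only [Finset.smul_sum, smul_smul]
      rw [← Finset.add_sum_erase _ _ (Finset.mem_univ i)]
      congr 1
      rw [← hc, inv_mul_cancel₀ hcne, one_smul]
    have hvW : v ∈ W := by
      rw [hv, hsplit]
      have : row i - (row i + ∑ j ∈ Finset.univ.erase i, (c⁻¹ * A⁻¹ i j) • row j)
          = -∑ j ∈ Finset.univ.erase i, (c⁻¹ * A⁻¹ i j) • row j := by abel
      rw [this]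
      refine Submodule.neg_mem _ (Submodule.sum_mem _ fun j hj => Submodule.smul_mem _ _ ?_)
      exact Submodule.subset_span ⟨j, Finset.ne_of_mem_erase hj, rfl⟩
    have hproj : (W.starProjection (row i) : EuclideanSpace ℂ (Fin n)) = v := by
      refine Submodule.eq_starProjection_of_mem_of_inner_eq_zero hvW fun u hu => ?_
      have : row i - v = c⁻¹ • w i := by rw [hv]; abel
      rw [this, inner_smul_left, horth u hu, mul_zero]
    have hid : Metric.infDist (row i) (W : Set (EuclideanSpace ℂ (Fin n)))
        = ‖row i - W.starProjection (row i)‖ := by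
      rw [Metric.infDist_eq_iInf, Submodule.starProjection_minimal]
      simp_rw [dist_eq_norm]
      rfl
    rw [hid, hproj, hv]
    have : row i - (row i - c⁻¹ • w i) = c⁻¹ • w i := by abel
    rw [this, norm_smul, norm_inv, hcr]
    rw [Complex.norm_real, Real.norm_of_nonneg (by positivity)]
    rw [pow_two, mul_inv, mul_assoc, inv_mul_cancel₀ (hwpos i).ne', mul_one]
  -- assemble everything
  have hLHS : ∑ i : Fin m, (Real.sqrt (lam i) ^ 2)⁻¹ = ∑ i, (lam i)⁻¹ :=
    Finset.sum_congr rfl fun i _ => by rw [Real.sq_sqrt (hpos i).le]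
  have hRHS : ∀ i, (Metric.infDist (row i)
      (Submodule.span ℂ (row '' {j | j ≠ i}) : Set (EuclideanSpace ℂ (Fin n))) ^ 2)⁻¹
      = ‖w i‖ ^ 2 := by
    intro i
    rw [hdist i, inv_pow, inv_inv]
  have hbridge : ∑ i, (lam i)⁻¹ = ∑ i, ‖w i‖ ^ 2 := by
    have : ((∑ i, (lam i)⁻¹ : ℝ) : ℂ) = ((∑ i, ‖w i‖ ^ 2 : ℝ) : ℂ) := by
      push_cast
      calc (∑ i, ((lam i : ℂ))⁻¹) = Matrix.trace A⁻¹ := htrace.symm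
        _ = ∑ i, A⁻¹ i i := rfl
        _ = ∑ i, ((‖w i‖ ^ 2 : ℝ) : ℂ) := Finset.sum_congr rfl fun i _ => (hnorm i).symm
        _ = _ := by push_cast; ring
    exact_mod_cast this
  calc ∑ i : Fin m, (Real.sqrt (lam i) ^ 2)⁻¹ = ∑ i, (lam i)⁻¹ := hLHS
    _ = ∑ i, ‖w i‖ ^ 2 := hbridge
    _ = _ := (Finset.sum_congr rfl fun i _ => (hRHS i)).symm
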